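/- Let X and Y be metric spaces with X nonempty, and let P : X → Y be a submetry. Then: (i) if X is a compact space then Y is a compact space; (ii) if X is a proper metric space (all closed balls compact) then Y is a proper metric space; (iii) if X is a complete metric space then Y is a complete metric space. -/

import Mathlib

/-- A map `P : X → Y` between metric spaces is a submetry if it maps every open
ball onto the open ball of the same radius around the image of the center. -/
def IsSubmetry {X Y : Type*} [MetricSpace X] [MetricSpace Y] (P : X → Y) : Prop :=
  ∀ (x : X) (r : ℝ), 0 < r → P '' Metric.ball x r = Metric.ball (P x) r

theorem IsSubmetry.lipschitz {X Y : Type*} [MetricSpace X] [MetricSpace Y] {P : X → Y}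
    (hP : IsSubmetry P) : LipschitzWith 1 P := by
  apply LipschitzWith.of_dist_le_mul
  intro a b
  rw [NNReal.coe_one, one_mul]
  refine le_of_forall_gt_imp_ge_of_dense fun r hr => le_of_lt ?_
  have hr0 : 0 < r := lt_of_le_of_lt dist_nonneg hr
  have hb : P b ∈ Metric.ball (P a) r := by
    rw [← hP a r hr0]
    exact Set.mem_image_of_mem _ (Metric.mem_ball'.2 hr)
  exact Metric.mem_ball'.1 hb

theorem IsSubmetry.surjective {X Y : Type*} [MetricSpace X] [MetricSpace Y] [Nonempty X]
    {P : X → Y} (hP : IsSubmetry P) : Function.Surjective P := by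
  intro y
  obtain ⟨x0⟩ := ‹Nonempty X›
  have hr0 : 0 < dist y (P x0) + 1 := lt_of_le_of_lt dist_nonneg (lt_add_one _)
  have : y ∈ Metric.ball (P x0) (dist y (P x0) + 1) := Metric.mem_ball.2 (lt_add_one _)
  rw [← hP x0 _ hr0] at this
  obtain ⟨x, _, hx⟩ := this
  exact ⟨x, hx⟩

/-- Compactness, properness and completeness of the total space are inherited
by the base of a submetry. -/
theorem submetry_inherits_properties {X Y : Type*} [MetricSpace X] [MetricSpace Y]
    [Nonempty X] (P : X → Y) (hP : IsSubmetry P) :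
    (CompactSpace X → CompactSpace Y) ∧
      (ProperSpace X → ProperSpace Y) ∧
      (CompleteSpace X → CompleteSpace Y) := by
  have hc : Continuous P := hP.lipschitz.continuous
  have hs : Function.Surjective P := hP.surjective
  refine ⟨?_, ?_, ?_⟩
  · intro _
    exact ⟨by rw [← Set.image_univ_of_surjective hs]; exact isCompact_univ.image hc⟩
  · intro _
    constructor
    intro y r
    obtain ⟨x, rfl⟩ := hs y
    rcases le_or_gt r 0 with hr | hr
    · rcases lt_or_eq_of_le hr with hr' | rfl
      · simp [Metric.closedBall_eq_empty.2 hr']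
      · rw [Metric.closedBall_zero]; exact isCompact_singleton
    · have hsub : Metric.closedBall (P x) r ⊆ P '' Metric.closedBall x (r + 1) := by
        intro y hy
        have : y ∈ Metric.ball (P x) (r + 1) :=
          Metric.mem_ball.2 (lt_of_le_of_lt (Metric.mem_closedBall.1 hy) (lt_add_one r))
        rw [← hP x (r + 1) (by linarith)] at this
        exact Set.image_mono Metric.ball_subset_closedBall this
      exact ((isCompact_closedBall x (r + 1)).image hc).of_isClosed_subset
        Metric.isClosed_closedBall hsub
  · intro _
    apply Metric.complete_of_convergent_controlled_sequences (fun n => (1/2 : ℝ)^n)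
      (fun n => by positivity)
    intro u hu
    -- lift the sequence
    have key : ∀ n (x : X), ∃ x', P x = u n → P x' = u (n+1) ∧ dist x x' < (1/2 : ℝ)^n := by
      intro n x
      by_cases hx : P x = u n
      · have h1 : u (n+1) ∈ Metric.ball (P x) ((1/2 : ℝ)^n) := by
          rw [hx, Metric.mem_ball, dist_comm]
          exact hu n n (n+1) le_rfl (Nat.le_succ n)
        rw [← hP x _ (by positivity)] at h1
        obtain ⟨x', hx', hPx'⟩ := h1
        exact ⟨x', fun _ => ⟨hPx', Metric.mem_ball'.1 hx'⟩⟩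
      · exact ⟨x, fun h => absurd h hx⟩
    choose g hg using key
    obtain ⟨x0, hx0⟩ := hs (u 0)
    set f : ℕ → X := fun n => Nat.rec x0 (fun n xn => g n xn) n with hf
    have hfP : ∀ n, P (f n) = u n := by
      intro n
      induction n with
      | zero => exact hx0
      | succ k ih => exact (hg k (f k) ih).1
    have hfd : ∀ n, dist (f n) (f (n+1)) ≤ 1 * (1/2 : ℝ)^n := by
      intro n
      rw [one_mul]
      exact le_of_lt (hg n (f n) (hfP n)).2
    have hcauchy : CauchySeq f := cauchySeq_of_le_geometric (1/2) 1 (by norm_num) hfd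
    obtain ⟨l, hl⟩ := cauchySeq_tendsto_of_complete hcauchy
    refine ⟨P l, ?_⟩
    have hPf : P ∘ f = u := funext hfP
    have := (hc.tendsto l).comp hl
    rwa [hPf] at this
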